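/- Let f be a monotone nondecreasing set function with f(∅)=0 and multiplicative weak-submodularity constant c_f ≥ 1, meaning that for all S ⊆ T and x ∉ T, f(T∪{x}) - f(T) ≤ c_f · (f(S∪{x}) - f(S)). Then the greedy algorithm selecting N elements by maximal marginal gain returns a set S^g with f(S^g) ≥ (1 - e^{-1/c_f}) · max_{|S|=N} f(S). -/

import Mathlib

/-- Adding a whole set `B` to `A` gains at most `cf` times the sum of
individual marginal gains at `A`. -/
lemma stmt_11_union_bound {U : Type*} [DecidableEq U] (f : Finset U → ℝ)
    (cf : ℝ)
    (hweak : ∀ ⦃A B : Finset U⦄, A ⊆ B → ∀ x ∉ B,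
      f (insert x B) - f B ≤ cf * (f (insert x A) - f A))
    (A : Finset U) : ∀ B : Finset U,
    f (A ∪ B) - f A ≤ cf * ∑ x ∈ B \ A, (f (insert x A) - f A) := by
  intro B
  induction B using Finset.induction_on with
  | empty => simp
  | @insert x B hxB ih =>
    by_cases hxA : x ∈ A
    · have h1 : A ∪ insert x B = A ∪ B := by
        rw [Finset.union_insert, Finset.insert_eq_self.mpr (Finset.mem_union_left B hxA)]
      have h2 : insert x B \ A = B \ A := Finset.insert_sdiff_of_mem B hxA
      rw [h1, h2]; exact ih
    · have hxAB : x ∉ A ∪ B := by simp [hxA, hxB]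
      have h1 : A ∪ insert x B = insert x (A ∪ B) := Finset.union_insert x A B
      have h2 : insert x B \ A = insert x (B \ A) := Finset.insert_sdiff_of_notMem B hxA
      have hxBA : x ∉ B \ A := by simp [hxB]
      rw [h1, h2, Finset.sum_insert hxBA, mul_add]
      have key := hweak (Finset.subset_union_left (s₁ := A) (s₂ := B)) x hxAB
      linarith

/-- Greedy guarantee for weakly submodular functions with multiplicative
constant `c_f ≥ 1`: the greedy set `S^g` of size `N` satisfies
`f(S^g) ≥ (1 - e^{-1/c_f}) · max_{|S|=N} f(S)`. -/
theorem stmt_11 {U : Type*} [Fintype U] [DecidableEq U]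
    (f : Finset U → ℝ)
    (hmono : ∀ ⦃A B : Finset U⦄, A ⊆ B → f A ≤ f B)
    (hempty : f ∅ = 0)
    (cf : ℝ) (hcf : 1 ≤ cf)
    (hweak : ∀ ⦃A B : Finset U⦄, A ⊆ B → ∀ x ∉ B,
      f (insert x B) - f B ≤ cf * (f (insert x A) - f A))
    (N : ℕ) (hN : N ≤ Fintype.card U)
    (S : ℕ → Finset U) (hS0 : S 0 = ∅)
    (hgreedy : ∀ k < N, ∃ e ∉ S k, S (k + 1) = insert e (S k) ∧
      ∀ e' ∉ S k, f (insert e' (S k)) - f (S k) ≤ f (insert e (S k)) - f (S k)) :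
    ∀ T : Finset U, T.card = N →
      (1 - Real.exp (-1 / cf)) * f T ≤ f (S N) := by
  intro T hT
  have hcf0 : (0:ℝ) < cf := lt_of_lt_of_le one_pos hcf
  have hfT : 0 ≤ f T := by
    have := hmono (Finset.empty_subset T); linarith [hempty]
  rcases Nat.eq_zero_or_pos N with hN0 | hNpos
  · subst hN0
    have hTe : T = ∅ := Finset.card_eq_zero.mp hT
    have hexp : Real.exp (-1 / cf) ≤ 1 := by
      apply Real.exp_le_one_iff.mpr
      exact div_nonpos_of_nonpos_of_nonneg (by norm_num) hcf0.le
    rw [hS0, hempty, hTe, hempty]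
    nlinarith
  · have hNR : (0:ℝ) < (N:ℝ) := by exact_mod_cast hNpos
    have hNR1 : (1:ℝ) ≤ (N:ℝ) := by exact_mod_cast hNpos
    have hcfN : (0:ℝ) < cf * N := by positivity
    have hcfN1 : (1:ℝ) ≤ cf * N := by nlinarith
    set r : ℝ := 1 - 1 / (cf * N) with hr
    have hr0 : 0 ≤ r := by
      have h1 : 1 / (cf * N) ≤ 1 := by
        rw [div_le_one hcfN]
        exact hcfN1
      simp only [hr]
      linarith
    -- one greedy step
    have step : ∀ k < N, f T - f (S (k+1)) ≤ r * (f T - f (S k)) := by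
      intro k hk
      obtain ⟨e, he, hSk1, hmax⟩ := hgreedy k hk
      set δ : ℝ := f (insert e (S k)) - f (S k) with hδ
      have hδ0 : 0 ≤ δ := by
        have := hmono (Finset.subset_insert e (S k)); linarith
      have hsum : f (S k ∪ T) - f (S k)
          ≤ cf * ∑ x ∈ T \ S k, (f (insert x (S k)) - f (S k)) :=
        stmt_11_union_bound f cf hweak (S k) T
      have hterm : ∑ x ∈ T \ S k, (f (insert x (S k)) - f (S k))
          ≤ ((T \ S k).card : ℝ) * δ := by
        have := Finset.sum_le_card_nsmul (T \ S k)
          (fun x => f (insert x (S k)) - f (S k)) δ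
          (fun x hx => hmax x (Finset.mem_sdiff.mp hx).2)
        simpa [nsmul_eq_mul] using this
      have hcard : ((T \ S k).card : ℝ) ≤ (N : ℝ) := by
        have : (T \ S k).card ≤ T.card := Finset.card_le_card (Finset.sdiff_subset)
        exact_mod_cast hT ▸ this
      have hTle : f T ≤ f (S k ∪ T) := hmono Finset.subset_union_right
      have hkey : f T - f (S k) ≤ cf * N * δ := by
        have h1 : cf * ∑ x ∈ T \ S k, (f (insert x (S k)) - f (S k))
            ≤ cf * (((T \ S k).card : ℝ) * δ) :=
          mul_le_mul_of_nonneg_left hterm (le_of_lt hcf0)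
        have h2 : cf * (((T \ S k).card : ℝ) * δ) ≤ cf * ((N : ℝ) * δ) := by
          apply mul_le_mul_of_nonneg_left _ (le_of_lt hcf0)
          exact mul_le_mul_of_nonneg_right hcard hδ0
        nlinarith
      have hdiv : (f T - f (S k)) / (cf * N) ≤ δ :=
        (div_le_iff₀ hcfN).mpr (by linarith)
      have hrx : r * (f T - f (S k))
          = (f T - f (S k)) - (f T - f (S k)) / (cf * N) := by
        rw [hr]; ring
      rw [hSk1, hrx]
      linarith
    -- induction over greedy steps
    have main : ∀ k, k ≤ N → f T - f (S k) ≤ r ^ k * f T := by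
      intro k
      induction k with
      | zero => intro _; simp [hS0, hempty]
      | succ k ih =>
        intro hk
        have hk' : k < N := hk
        have h1 := step k hk'
        have h2 := ih (le_of_lt hk')
        calc f T - f (S (k+1)) ≤ r * (f T - f (S k)) := h1
          _ ≤ r * (r ^ k * f T) := mul_le_mul_of_nonneg_left h2 hr0
          _ = r ^ (k+1) * f T := by ring
    have hmain := main N le_rfl
    have hrexp : r ≤ Real.exp (-(1 / (cf * N))) := by
      have := Real.add_one_le_exp (-(1 / (cf * N)))
      linarith
    have hpow : r ^ N ≤ Real.exp (-1 / cf) := by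
      calc r ^ N ≤ (Real.exp (-(1 / (cf * N)))) ^ N :=
            pow_le_pow_left₀ hr0 hrexp N
        _ = Real.exp ((N : ℝ) * -(1 / (cf * N))) := (Real.exp_nat_mul _ N).symm
        _ = Real.exp (-1 / cf) := by
            congr 1
            field_simp
    have hfin : r ^ N * f T ≤ Real.exp (-1 / cf) * f T :=
      mul_le_mul_of_nonneg_right hpow hfT
    rw [sub_mul, one_mul]
    linarith
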